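/- For the autonomous system u₁' = u₁(1 - u₁ - α₁u₂ - δ₁u₃), u₂' = β₂u₂(1 - u₂ - α₂u₁ - δ₂u₄), u₃' = β₃(u₂ - u₃), u₄' = β₄(1 - u₄ - δ₄u₄u₂) with all parameters positive, the steady state (1,0,0,1) has Jacobian eigenvalues -1, β₂(1 - α₂ - δ₂), -β₃, -β₄; hence it is linearly stable if and only if α₂ + δ₂ > 1. -/

import Mathlib

open Polynomial

lemma eig_iff_det_aux (M : Matrix (Fin 4) (Fin 4) ℝ) (μ : ℝ) :
    Module.End.HasEigenvalue (Matrix.toLin' M) μ ↔ (M - μ • 1).det = 0 := by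
  rw [← Matrix.exists_mulVec_eq_zero_iff, Module.End.hasEigenvalue_iff, Submodule.ne_bot_iff]
  constructor
  · rintro ⟨v, hv, hv0⟩
    rw [Module.End.mem_eigenspace_iff, Matrix.toLin'_apply] at hv
    exact ⟨v, hv0, by simp [Matrix.sub_mulVec, Matrix.smul_mulVec, hv]⟩
  · rintro ⟨v, hv0, hv⟩
    refine ⟨v, ?_, hv0⟩
    rw [Module.End.mem_eigenspace_iff, Matrix.toLin'_apply]
    rw [Matrix.sub_mulVec, Matrix.smul_mulVec, sub_eq_zero] at hv
    simpa using hv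

/-- The tumour-free steady state (1,0,0,1): the Jacobian has eigenvalues
-1, β₂(1-α₂-δ₂), -β₃, -β₄, hence all eigenvalues are negative iff α₂ + δ₂ > 1. -/
theorem tumour_free_steady_state_stability
    (α₁ α₂ δ₁ δ₂ δ₄ β₂ β₃ β₄ : ℝ)
    (hα₁ : 0 < α₁) (hα₂ : 0 < α₂) (hδ₁ : 0 < δ₁) (hδ₂ : 0 < δ₂) (hδ₄ : 0 < δ₄)
    (hβ₂ : 0 < β₂) (hβ₃ : 0 < β₃) (hβ₄ : 0 < β₄)
    (J : Matrix (Fin 4) (Fin 4) ℝ)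
    (hJ : J = !![-1, -α₁, -δ₁, 0;
                 0, β₂ * (1 - α₂ - δ₂), 0, 0;
                 0, β₃, -β₃, 0;
                 0, -β₄ * δ₄, 0, -β₄]) :
    J.charpoly = (X - C (-1)) * (X - C (β₂ * (1 - α₂ - δ₂))) *
      (X - C (-β₃)) * (X - C (-β₄)) ∧
    ((∀ μ : ℝ, Module.End.HasEigenvalue (Matrix.toLin' J) μ → μ < 0) ↔ 1 < α₂ + δ₂) := by
  subst hJ
  set d : ℝ := β₂ * (1 - α₂ - δ₂) with hd
  constructor
  · rw [Matrix.charpoly]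
    simp [Matrix.det_succ_row_zero, Fin.sum_univ_succ, Matrix.charmatrix_apply,
      Matrix.one_apply, Matrix.diagonal_apply, Fin.succAbove]
    ring
  · have hdet : ∀ μ : ℝ,
        (!![-1, -α₁, -δ₁, 0; 0, d, 0, 0; 0, β₃, -β₃, 0; 0, -β₄ * δ₄, 0, -β₄]
          - μ • (1 : Matrix (Fin 4) (Fin 4) ℝ)).det
          = (μ + 1) * (μ - d) * (μ + β₃) * (μ + β₄) := by
      intro μ
      simp [Matrix.det_succ_row_zero, Fin.sum_univ_succ, Matrix.one_apply, Fin.succAbove]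
      ring
    have key : ∀ μ : ℝ,
        Module.End.HasEigenvalue (Matrix.toLin'
          !![-1, -α₁, -δ₁, 0; 0, d, 0, 0; 0, β₃, -β₃, 0; 0, -β₄ * δ₄, 0, -β₄]) μ ↔
        (μ = -1 ∨ μ = d ∨ μ = -β₃ ∨ μ = -β₄) := by
      intro μ
      rw [eig_iff_det_aux, hdet]
      constructor
      · intro h
        rcases mul_eq_zero.1 h with h | h
        · rcases mul_eq_zero.1 h with h | h
          · rcases mul_eq_zero.1 h with h | h
            · exact Or.inl (by linarith)
            · exact Or.inr (Or.inl (by linarith))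
          · exact Or.inr (Or.inr (Or.inl (by linarith)))
        · exact Or.inr (Or.inr (Or.inr (by linarith)))
      · rintro (rfl | rfl | rfl | rfl) <;> ring
    constructor
    · intro h
      have hde : d < 0 := h d ((key d).2 (Or.inr (Or.inl rfl)))
      nlinarith
    · intro h μ hμ
      rcases (key μ).1 hμ with rfl | rfl | rfl | rfl
      · linarith
      · nlinarith
      · linarith
      · linarith
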